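/- Let p be a prime and n ≥ 2 an integer. Define, for a nonzero complex number x, the 2×2n matrix A'_{2,2n}(x) := B'_{2,2n}(p^{3/2−n}x, p^{5/2−n}x, …, p^{n−3/2}x), i.e. with l-th argument p^{l−1/2−n}·x for l = 2, …, 2n−1 (here p^{r} for half-integral r denotes the positive real power). Then A'_{2,2n}(x) = A'_{2,2n}(x^{−1}) for every nonzero complex number x. -/

import Mathlib

open Matrix

noncomputable section

/-- The coefficient `b_{t,j,l,p}(X)`. -/
def bcoef (p l t j : ℕ) (X : ℂ) : ℂ :=
  if t + 2 = j then ((p : ℂ) ^ ((2 * l : ℤ) - 2 * j + 2) - 1) * (p : ℂ) ^ ((j : ℤ) - 1 - l) * X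
  else if t + 1 = j then 1 + (p : ℂ) ^ ((j : ℤ) - 1 - l) * ((p : ℂ) - 1) * X + X ^ 2
  else if t = j then (p : ℂ) ^ ((j : ℤ) - l) * X
  else 0

/-- The `l × (l+1)` matrix `B_{l,l+1}(X) = (b_{t,j,l,p}(X))_{0≤t≤l−1, 0≤j≤l}`. -/
def Bmat (p l : ℕ) (X : ℂ) : Matrix (Fin l) (Fin (l + 1)) ℂ :=
  Matrix.of fun t j => bcoef p l (t : ℕ) (j : ℕ) X

/-- Auxiliary product: `BprodAux p X m = B_{2,3}(X 2) * B_{3,4}(X 3) * ⋯ * B_{m+2,m+3}(X (m+2))`,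
a `2 × (m+3)` matrix; thus `BprodAux p X (2n−3) = B_{2,2n}(X_2,…,X_{2n−1})` for `n ≥ 2`. -/
def BprodAux (p : ℕ) (X : ℕ → ℂ) : (m : ℕ) → Matrix (Fin 2) (Fin (m + 3)) ℂ
  | 0 => Bmat p 2 (X 2)
  | m + 1 => BprodAux p X m * Bmat p (m + 3) (X (m + 3))

/-- `B'_{2,2n}(X_2,…,X_{2n−1}) = (∏_{i=2}^{2n−1} X_i)⁻¹ · B_{2,2n}(X_2,…,X_{2n−1})`. -/
def Bprime (p n : ℕ) (X : ℕ → ℂ) : Matrix (Fin 2) (Fin (2 * n - 3 + 3)) ℂ :=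
  (∏ i ∈ Finset.Icc 2 (2 * n - 1), X i)⁻¹ • BprodAux p X (2 * n - 3)

/-- `A'_{2,2n}(x) = B'_{2,2n}(p^{3/2−n}x, p^{5/2−n}x, …, p^{n−3/2}x)`, the `l`-th
argument being `p^{l−1/2−n}·x` (real power of `p`). -/
def Aprime (p n : ℕ) (x : ℂ) : Matrix (Fin 2) (Fin (2 * n - 3 + 3)) ℂ :=
  Bprime p n fun l => (((p : ℝ) ^ ((l : ℝ) - 1 / 2 - (n : ℝ)) : ℝ) : ℂ) * x

lemma bcoef_zero (p l t j : ℕ) (X : ℂ) (h1 : t + 2 ≠ j) (h2 : t + 1 ≠ j) (h3 : t ≠ j) :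
    bcoef p l t j X = 0 := by
  unfold bcoef; rw [if_neg h1, if_neg h2, if_neg h3]

lemma bcoef_eq2 (p l t j : ℕ) (X : ℂ) (h : t + 2 = j) :
    bcoef p l t j X = ((p : ℂ) ^ ((2 * l : ℤ) - 2 * j + 2) - 1) * (p : ℂ) ^ ((j : ℤ) - 1 - l) * X := by
  unfold bcoef; rw [if_pos h]

lemma bcoef_eq1 (p l t j : ℕ) (X : ℂ) (h : t + 1 = j) :
    bcoef p l t j X = 1 + (p : ℂ) ^ ((j : ℤ) - 1 - l) * ((p : ℂ) - 1) * X + X ^ 2 := by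
  unfold bcoef; rw [if_neg (by omega), if_pos h]

lemma bcoef_eq0 (p l t j : ℕ) (X : ℂ) (h : t = j) :
    bcoef p l t j X = (p : ℂ) ^ ((j : ℤ) - l) * X := by
  unfold bcoef; rw [if_neg (by omega), if_neg (by omega), if_pos h]

lemma bcoef_high (p l t k : ℕ) (X : ℂ) (ht : t < l) (hk : l < k) : bcoef p l t k X = 0 := by
  by_cases h1 : t + 2 = k
  · rw [bcoef_eq2 p l t k X h1, show ((2 * l : ℤ) - 2 * k + 2) = 0 by omega, zpow_zero]
    ring
  · exact bcoef_zero p l t k X h1 (by omega) (by omega)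

lemma three_term (N t : ℕ) (f : ℕ → ℂ) (ht : t + 2 < N)
    (hf : ∀ k, k ≠ t → k ≠ t + 1 → k ≠ t + 2 → f k = 0) :
    ∑ k ∈ Finset.range N, f k = f t + f (t + 1) + f (t + 2) := by
  have hsub : ({t, t + 1, t + 2} : Finset ℕ) ⊆ Finset.range N := by
    intro k hk
    simp only [Finset.mem_insert, Finset.mem_singleton] at hk
    rw [Finset.mem_range]; omega
  rw [← Finset.sum_subset hsub (fun k _ hk => by
    simp only [Finset.mem_insert, Finset.mem_singleton] at hk
    push_neg at hk
    exact hf k hk.1 hk.2.1 hk.2.2)]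
  rw [Finset.sum_insert (by simp), Finset.sum_insert (by simp), Finset.sum_singleton, add_assoc]

set_option maxHeartbeats 1000000 in
lemma Bmat_swap (p l : ℕ) (X Y : ℂ) :
    Bmat p l X * Bmat p (l + 1) Y = Bmat p l Y * Bmat p (l + 1) X := by
  ext t j
  simp only [Matrix.mul_apply, Bmat, Matrix.of_apply]
  rw [Fin.sum_univ_eq_sum_range (fun k => bcoef p l t k X * bcoef p (l + 1) k (j : ℕ) Y),
    Fin.sum_univ_eq_sum_range (fun k => bcoef p l t k Y * bcoef p (l + 1) k (j : ℕ) X)]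
  have ht : (t : ℕ) < l := t.isLt
  have ext1 : ∀ (U V : ℂ), ∑ k ∈ Finset.range (l + 1), bcoef p l t k U * bcoef p (l + 1) k (j : ℕ) V
      = ∑ k ∈ Finset.range (l + 3), bcoef p l t k U * bcoef p (l + 1) k (j : ℕ) V := by
    intro U V
    refine Finset.sum_subset (by intro k hk; rw [Finset.mem_range] at *; omega) ?_
    intro k hk1 hk2
    rw [Finset.mem_range] at hk1 hk2
    rw [bcoef_high p l t k U ht (by omega), zero_mul]
  rw [ext1 X Y, ext1 Y X,
    three_term (l + 3) t _ (by omega)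
      (fun k h1 h2 h3 => by rw [bcoef_zero p l t k X (by omega) (by omega) (by omega), zero_mul]),
    three_term (l + 3) t _ (by omega)
      (fun k h1 h2 h3 => by rw [bcoef_zero p l t k Y (by omega) (by omega) (by omega), zero_mul])]
  set tt := (t : ℕ) with htt
  set jj := (j : ℕ) with hjj
  rw [bcoef_eq0 p l tt tt X rfl, bcoef_eq0 p l tt tt Y rfl,
    bcoef_eq1 p l tt (tt + 1) X rfl, bcoef_eq1 p l tt (tt + 1) Y rfl,
    bcoef_eq2 p l tt (tt + 2) X rfl, bcoef_eq2 p l tt (tt + 2) Y rfl]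
  have hcase : jj = tt ∨ jj = tt + 1 ∨ jj = tt + 2 ∨ jj = tt + 3 ∨ jj = tt + 4 ∨
      (jj ≠ tt ∧ jj ≠ tt + 1 ∧ jj ≠ tt + 2 ∧ jj ≠ tt + 3 ∧ jj ≠ tt + 4) := by omega
  rcases hcase with h | h | h | h | h | ⟨h1, h2, h3, h4, h5⟩
  · rw [bcoef_eq0 p (l+1) tt jj X h.symm, bcoef_eq0 p (l+1) tt jj Y h.symm,
      bcoef_zero p (l+1) (tt+1) jj X (by omega) (by omega) (by omega),
      bcoef_zero p (l+1) (tt+1) jj Y (by omega) (by omega) (by omega),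
      bcoef_zero p (l+1) (tt+2) jj X (by omega) (by omega) (by omega),
      bcoef_zero p (l+1) (tt+2) jj Y (by omega) (by omega) (by omega)]
    push_cast
    ring
  · rw [bcoef_eq1 p (l+1) tt jj X (by omega), bcoef_eq1 p (l+1) tt jj Y (by omega),
      bcoef_eq0 p (l+1) (tt+1) jj X (by omega), bcoef_eq0 p (l+1) (tt+1) jj Y (by omega),
      bcoef_zero p (l+1) (tt+2) jj X (by omega) (by omega) (by omega),
      bcoef_zero p (l+1) (tt+2) jj Y (by omega) (by omega) (by omega)]
    rw [h]
    push_cast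
    ring
  · rw [bcoef_eq2 p (l+1) tt jj X (by omega), bcoef_eq2 p (l+1) tt jj Y (by omega),
      bcoef_eq1 p (l+1) (tt+1) jj X (by omega), bcoef_eq1 p (l+1) (tt+1) jj Y (by omega),
      bcoef_eq0 p (l+1) (tt+2) jj X (by omega), bcoef_eq0 p (l+1) (tt+2) jj Y (by omega)]
    rw [h]
    push_cast
    ring
  · rw [bcoef_zero p (l+1) tt jj X (by omega) (by omega) (by omega),
      bcoef_zero p (l+1) tt jj Y (by omega) (by omega) (by omega),
      bcoef_eq2 p (l+1) (tt+1) jj X (by omega), bcoef_eq2 p (l+1) (tt+1) jj Y (by omega),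
      bcoef_eq1 p (l+1) (tt+2) jj X (by omega), bcoef_eq1 p (l+1) (tt+2) jj Y (by omega)]
    rw [h]
    push_cast
    ring
  · rw [bcoef_zero p (l+1) tt jj X (by omega) (by omega) (by omega),
      bcoef_zero p (l+1) tt jj Y (by omega) (by omega) (by omega),
      bcoef_zero p (l+1) (tt+1) jj X (by omega) (by omega) (by omega),
      bcoef_zero p (l+1) (tt+1) jj Y (by omega) (by omega) (by omega),
      bcoef_eq2 p (l+1) (tt+2) jj X (by omega), bcoef_eq2 p (l+1) (tt+2) jj Y (by omega)]
    rw [h]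
    push_cast
    ring
  · rw [bcoef_zero p (l+1) tt jj X (by omega) (by omega) (by omega),
      bcoef_zero p (l+1) tt jj Y (by omega) (by omega) (by omega),
      bcoef_zero p (l+1) (tt+1) jj X (by omega) (by omega) (by omega),
      bcoef_zero p (l+1) (tt+1) jj Y (by omega) (by omega) (by omega),
      bcoef_zero p (l+1) (tt+2) jj X (by omega) (by omega) (by omega),
      bcoef_zero p (l+1) (tt+2) jj Y (by omega) (by omega) (by omega)]
    ring

lemma bcoef_inv (p l t j : ℕ) (X : ℂ) (hX : X ≠ 0) :
    bcoef p l t j X⁻¹ = (X ^ 2)⁻¹ * bcoef p l t j X := by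
  unfold bcoef
  split_ifs <;> field_simp <;> ring

lemma Bmat_inv (p l : ℕ) (X : ℂ) (hX : X ≠ 0) :
    Bmat p l X⁻¹ = (X ^ 2)⁻¹ • Bmat p l X := by
  ext t j
  simp only [Bmat, Matrix.of_apply, Matrix.smul_apply, smul_eq_mul]
  exact bcoef_inv p l t j X hX

lemma BprodAux_congr (p : ℕ) : ∀ (m : ℕ) (X X' : ℕ → ℂ),
    (∀ l, 2 ≤ l → l ≤ m + 2 → X l = X' l) → BprodAux p X m = BprodAux p X' m
  | 0, X, X', h => by simp only [BprodAux, h 2 (by omega) (by omega)]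
  | m + 1, X, X', h => by
    simp only [BprodAux]
    rw [BprodAux_congr p m X X' (fun l h2 hl => h l h2 (by omega)), h (m + 3) (by omega) (by omega)]

lemma BprodAux_push (p : ℕ) : ∀ (m : ℕ) (X : ℕ → ℂ) (Y : ℂ),
    BprodAux p X m * Bmat p (m + 3) Y
      = BprodAux p (fun l => if l = 2 then Y else X (l - 1)) (m + 1)
  | 0, X, Y => by
    simp only [BprodAux]
    rw [Bmat_swap p 2 (X 2) Y]
    norm_num
  | m + 1, X, Y => by
    have step : BprodAux p X (m + 1) * Bmat p (m + 1 + 3) Y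
        = (BprodAux p X m * Bmat p (m + 3) Y) * Bmat p (m + 4) (X (m + 3)) := by
      simp only [BprodAux]
      rw [Matrix.mul_assoc, Matrix.mul_assoc, Bmat_swap p (m + 3) (X (m + 3)) Y]
    rw [step, BprodAux_push p m X Y]
    show _ = BprodAux p _ (m + 1) * Bmat p (m + 4) (if m + 1 + 3 = 2 then Y else X (m + 1 + 3 - 1))
    rw [if_neg (by omega), show m + 1 + 3 - 1 = m + 3 from by omega]

lemma BprodAux_rev (p : ℕ) : ∀ (m : ℕ) (X : ℕ → ℂ),
    BprodAux p X m = BprodAux p (fun l => X (m + 4 - l)) m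
  | 0, X => rfl
  | m + 1, X => by
    have : BprodAux p X (m + 1) = BprodAux p (fun l => X (m + 4 - l)) m * Bmat p (m + 3) (X (m + 3)) := by
      rw [show BprodAux p X (m+1) = BprodAux p X m * Bmat p (m + 3) (X (m + 3)) from rfl,
        ← BprodAux_rev p m X]
    rw [this, BprodAux_push p m _ (X (m + 3))]
    exact BprodAux_congr p (m + 1) _ _ (fun l h2 hl => by
      show (if l = 2 then X (m + 3) else X (m + 4 - (l - 1))) = X (m + 1 + 4 - l)
      split_ifs with h
      · congr 1; omega
      · congr 1; omega)

lemma BprodAux_inv (p : ℕ) : ∀ (m : ℕ) (X : ℕ → ℂ), (∀ l, X l ≠ 0) →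
    BprodAux p (fun l => (X l)⁻¹) m
      = ((∏ l ∈ Finset.Icc 2 (m + 2), X l) ^ 2)⁻¹ • BprodAux p X m
  | 0, X, hX => by
    simp only [BprodAux, Finset.Icc_self, Finset.prod_singleton]
    exact Bmat_inv p 2 (X 2) (hX 2)
  | m + 1, X, hX => by
    simp only [BprodAux]
    rw [BprodAux_inv p m X hX, Bmat_inv p (m + 3) (X (m + 3)) (hX (m + 3)),
      Finset.prod_Icc_succ_top (by omega : 2 ≤ m + 3)]
    rw [Matrix.smul_mul, Matrix.mul_smul, smul_smul]
    congr 1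
    have h1 : (∏ l ∈ Finset.Icc 2 (m + 2), X l) ≠ 0 :=
      Finset.prod_ne_zero_iff.mpr (fun a _ => hX a)
    field_simp

/-- for a prime `p` and `n ≥ 2`, `A'_{2,2n}(x) = A'_{2,2n}(x⁻¹)` for every
nonzero complex number `x`. -/
theorem statement13 (p n : ℕ) (hp : p.Prime) (hn : 2 ≤ n) (x : ℂ) (hx : x ≠ 0) :
    Aprime p n x = Aprime p n x⁻¹ := by
  have hpR : (0 : ℝ) < (p : ℝ) := by exact_mod_cast hp.pos
  set c : ℕ → ℝ := fun l => (p : ℝ) ^ ((l : ℝ) - 1 / 2 - (n : ℝ)) with hc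
  have hc0 : ∀ l, c l ≠ 0 := fun l => ne_of_gt (Real.rpow_pos_of_pos hpR _)
  set W : ℕ → ℂ := fun l => ((c l : ℝ) : ℂ) * x with hW
  set V : ℕ → ℂ := fun l => ((c l : ℝ) : ℂ) * x⁻¹ with hV
  have hW0 : ∀ l, W l ≠ 0 := fun l =>
    mul_ne_zero (by exact_mod_cast Complex.ofReal_ne_zero.mpr (hc0 l)) hx
  have hU0 : ∀ l, W (2 * n + 1 - l) ≠ 0 := fun l => hW0 _
  have hkey : ∀ l, 2 ≤ l → l ≤ 2 * n + 1 → V l = (W (2 * n + 1 - l))⁻¹ := by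
    intro l h2 hl
    have hcast : ((2 * n + 1 - l : ℕ) : ℝ) = 2 * (n : ℝ) + 1 - (l : ℝ) := by
      push_cast [Nat.cast_sub (by omega : l ≤ 2 * n + 1)]
      ring
    have hprod : c (2 * n + 1 - l) * c l = 1 := by
      rw [hc]
      dsimp only
      rw [← Real.rpow_add hpR,
        show ((2 * n + 1 - l : ℕ) : ℝ) - 1 / 2 - (n : ℝ) + ((l : ℝ) - 1 / 2 - (n : ℝ)) = 0 by
          rw [hcast]; ring,
        Real.rpow_zero]
    show ((c l : ℝ) : ℂ) * x⁻¹ = (((c (2 * n + 1 - l) : ℝ) : ℂ) * x)⁻¹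
    have hcl : c l = (c (2 * n + 1 - l))⁻¹ := by
      exact eq_inv_of_mul_eq_one_left (by rw [mul_comm]; exact hprod)
    rw [mul_inv, show ((c l : ℝ) : ℂ) = (((c (2 * n + 1 - l) : ℝ) : ℂ))⁻¹ by
      rw [← Complex.ofReal_inv]
      exact_mod_cast congrArg Complex.ofReal hcl]
  set P : ℂ := ∏ l ∈ Finset.Icc 2 (2 * n - 1), W l with hP
  have hP0 : P ≠ 0 := Finset.prod_ne_zero_iff.mpr (fun a _ => hW0 a)
  have hm2 : 2 * n - 3 + 2 = 2 * n - 1 := by omega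
  have hUprod : ∏ l ∈ Finset.Icc 2 (2 * n - 1), W (2 * n + 1 - l) = P := by
    rw [hP]
    refine Finset.prod_nbij' (i := fun l => 2 * n + 1 - l) (j := fun l => 2 * n + 1 - l)
      ?_ ?_ ?_ ?_ ?_ <;>
      intro a ha <;> simp only [Finset.mem_Icc] at * <;> omega
  -- now the chain
  show Bprime p n W = Bprime p n V
  have step1 : BprodAux p V (2 * n - 3) = BprodAux p (fun l => (W (2 * n + 1 - l))⁻¹) (2 * n - 3) :=
    BprodAux_congr p _ _ _ (fun l h2 hl => hkey l h2 (by omega))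
  have step2 : BprodAux p (fun l => (W (2 * n + 1 - l))⁻¹) (2 * n - 3)
      = ((∏ l ∈ Finset.Icc 2 (2 * n - 3 + 2), W (2 * n + 1 - l)) ^ 2)⁻¹
        • BprodAux p (fun l => W (2 * n + 1 - l)) (2 * n - 3) :=
    BprodAux_inv p _ _ hU0
  have step3 : BprodAux p W (2 * n - 3) = BprodAux p (fun l => W (2 * n + 1 - l)) (2 * n - 3) := by
    rw [BprodAux_rev p (2 * n - 3) W]
    exact BprodAux_congr p _ _ _ (fun l h2 hl => by congr 1; omega)
  have hVprod : ∏ l ∈ Finset.Icc 2 (2 * n - 1), V l = P⁻¹ := by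
    have h1 : ∏ l ∈ Finset.Icc 2 (2 * n - 1), V l
        = ∏ l ∈ Finset.Icc 2 (2 * n - 1), (W (2 * n + 1 - l))⁻¹ :=
      Finset.prod_congr rfl (fun l hl => by
        rw [Finset.mem_Icc] at hl
        exact hkey l hl.1 (by omega))
    calc ∏ l ∈ Finset.Icc 2 (2 * n - 1), V l
        = ∏ l ∈ Finset.Icc 2 (2 * n - 1), (W (2 * n + 1 - l))⁻¹ := h1
      _ = (∏ l ∈ Finset.Icc 2 (2 * n - 1), W (2 * n + 1 - l))⁻¹ := by
          rw [Finset.prod_inv_distrib]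
      _ = P⁻¹ := by rw [hUprod]
  unfold Bprime
  rw [← hP, hVprod, step1, step2, hm2, hUprod, ← step3, inv_inv, smul_smul]
  congr 1
  field_simp

end
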